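/- arXiv:2006.14461 — 9 statements merged into one kernel-verified Lean document; each statement's English description precedes it below -/
import Mathlib

section
/- Let κ > 0 and σ ∈ {−1, 1}. Let I ⊆ ℝ be an open interval and s : I → ℝ a twice differentiable function satisfying s′(ξ)² + cosh²(s(ξ))/(κ² + 1) = 1 and s′(ξ) ≠ 0 for every ξ ∈ I. Define ψ : I → ℝ by ψ(ξ) = (1+σ)·arcsin(cosh(s(ξ))/√(κ²+1)) + (1−σ)·arccos(cosh(s(ξ))/√(κ²+1)). Then ψ is twice differentiable and ψ″(ξ) = σ·sin(ψ(ξ)) for every ξ ∈ I; equivalently, the function φ(u,v) := ψ(u+v) satisfies the sine-Gordon equation ∂²φ/∂u∂v = σ·sin(φ). -/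
/-- Sine-Gordon lemma for Minding's bobbin: if `s` is twice differentiable on the open
interval `(a,b)` with `s′(ξ)² + cosh²(s(ξ))/(κ²+1) = 1` and `s′(ξ) ≠ 0`, then
`ψ(ξ) = (1+σ)·arcsin(cosh(s ξ)/√(κ²+1)) + (1−σ)·arccos(cosh(s ξ)/√(κ²+1))`
is twice differentiable and satisfies `ψ″ = σ·sin ψ` on `(a,b)`;
equivalently `φ(u,v) = ψ(u+v)` solves the sine-Gordon equation `∂²φ/∂u∂v = σ sin φ`. -/
theorem sineGordon_minding_bobbin (κ σ a b : ℝ) (hκ : 0 < κ) (hσ : σ = -1 ∨ σ = 1)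
    (s ψ : ℝ → ℝ)
    (hs : ∀ ξ ∈ Set.Ioo a b, DifferentiableAt ℝ s ξ)
    (hs' : ∀ ξ ∈ Set.Ioo a b, DifferentiableAt ℝ (deriv s) ξ)
    (heq : ∀ ξ ∈ Set.Ioo a b,
      (deriv s ξ) ^ 2 + (Real.cosh (s ξ)) ^ 2 / (κ ^ 2 + 1) = 1)
    (hne : ∀ ξ ∈ Set.Ioo a b, deriv s ξ ≠ 0)
    (hψ : ∀ ξ, ψ ξ =
      (1 + σ) * Real.arcsin (Real.cosh (s ξ) / Real.sqrt (κ ^ 2 + 1)) +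
      (1 - σ) * Real.arccos (Real.cosh (s ξ) / Real.sqrt (κ ^ 2 + 1))) :
    ∀ ξ ∈ Set.Ioo a b, DifferentiableAt ℝ ψ ξ ∧ DifferentiableAt ℝ (deriv ψ) ξ ∧
      deriv (deriv ψ) ξ = σ * Real.sin (ψ ξ) := by
  intro ξ hξ
  set c : ℝ := Real.sqrt (κ ^ 2 + 1) with hc
  have hk1 : (0:ℝ) < κ ^ 2 + 1 := by positivity
  have hc0 : 0 < c := Real.sqrt_pos.2 hk1
  have hcsq : c ^ 2 = κ ^ 2 + 1 := Real.sq_sqrt hk1.le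
  set g : ℝ → ℝ := fun x => Real.cosh (s x) / c with hg
  -- basic bounds on g on the interval
  have hgfacts : ∀ x ∈ Set.Ioo a b, 0 < g x ∧ g x < 1 ∧
      Real.sqrt (1 - g x ^ 2) = |deriv s x| := by
    intro x hx
    have hcosh : 0 < Real.cosh (s x) := Real.cosh_pos (s x)
    have hgpos : 0 < g x := div_pos hcosh hc0
    have hsne := hne x hx
    have hsq : (deriv s x) ^ 2 > 0 := by positivity
    have heqx := heq x hx
    have hgsq : g x ^ 2 = 1 - (deriv s x) ^ 2 := by
      have : g x ^ 2 = (Real.cosh (s x)) ^ 2 / (κ ^ 2 + 1) := by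
        simp only [hg, div_pow, hcsq]
      rw [this]; linarith
    have hglt : g x < 1 := by nlinarith
    refine ⟨hgpos, hglt, ?_⟩
    rw [hgsq]
    have : 1 - (1 - (deriv s x) ^ 2) = (deriv s x) ^ 2 := by ring
    rw [this, Real.sqrt_sq_eq_abs]
  -- sign of deriv s near ξ
  set ε : ℝ := if 0 < deriv s ξ then 1 else -1 with hε
  have hεone : ε = 1 ∨ ε = -1 := by rw [hε]; split <;> simp
  have hεs : 0 < ε * deriv s ξ := by
    rcases lt_or_gt_of_ne (hne ξ hξ) with h | h
    · rw [hε, if_neg (by linarith)]; linarith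
    · rw [hε, if_pos h]; linarith
  have habs : ∀ x : ℝ, 0 < ε * deriv s x → |deriv s x| = ε * deriv s x := by
    intro x hx
    rcases hεone with h | h <;> rw [h] at hx ⊢
    · rw [one_mul] at hx ⊢; exact abs_of_pos hx
    · rw [neg_one_mul] at hx ⊢
      exact abs_of_neg (by linarith)
  have hcont : ContinuousAt (deriv s) ξ := (hs' ξ hξ).continuousAt
  have hU : ∀ᶠ x in nhds ξ, x ∈ Set.Ioo a b ∧ 0 < ε * deriv s x := by
    have h1 : ∀ᶠ x in nhds ξ, x ∈ Set.Ioo a b := isOpen_Ioo.mem_nhds hξ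
    have hcm : ContinuousAt (fun x => ε * deriv s x) ξ := continuousAt_const.mul hcont
    have h2 : ∀ᶠ x in nhds ξ, 0 < ε * deriv s x :=
      Filter.eventually_of_mem (hcm.preimage_mem_nhds (Ioi_mem_nhds hεs)) fun x hx => hx
    exact h1.and h2
  -- the key derivative computation
  have key : ∀ x, x ∈ Set.Ioo a b → 0 < ε * deriv s x →
      HasDerivAt ψ (2 * σ * ε * Real.sinh (s x) / c) x := by
    intro x hx hsx
    obtain ⟨hg0, hg1, hgs⟩ := hgfacts x hx
    have hne1 : g x ≠ -1 := by linarith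
    have hne1' : g x ≠ 1 := ne_of_lt hg1
    have hds : HasDerivAt s (deriv s x) x := (hs x hx).hasDerivAt
    have hdg : HasDerivAt g (Real.sinh (s x) * deriv s x / c) x := by
      simpa [mul_comm, mul_div_assoc] using (hds.cosh).div_const c
    have hdarcsin : HasDerivAt (fun y => Real.arcsin (g y))
        (1 / Real.sqrt (1 - g x ^ 2) * (Real.sinh (s x) * deriv s x / c)) x :=
      (Real.hasDerivAt_arcsin hne1 hne1').comp x hdg
    have hdarccos : HasDerivAt (fun y => Real.arccos (g y))
        (-(1 / Real.sqrt (1 - g x ^ 2)) * (Real.sinh (s x) * deriv s x / c)) x :=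
      (Real.hasDerivAt_arccos hne1 hne1').comp x hdg
    have hcomb : HasDerivAt ψ
        ((1 + σ) * (1 / Real.sqrt (1 - g x ^ 2) * (Real.sinh (s x) * deriv s x / c)) +
         (1 - σ) * (-(1 / Real.sqrt (1 - g x ^ 2)) * (Real.sinh (s x) * deriv s x / c))) x := by
      have := (hdarcsin.const_mul (1 + σ)).add (hdarccos.const_mul (1 - σ))
      refine this.congr_of_eventuallyEq (Filter.Eventually.of_forall fun y => ?_)
      simp [hψ y, hg, hc]
    convert hcomb using 1
    rw [hgs, habs x hsx]
    have hdsne : deriv s x ≠ 0 := fun h => by simp [h] at hsx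
    have hεne : ε ≠ 0 := by rcases hεone with h | h <;> rw [h] <;> norm_num
    field_simp
    rcases hεone with h | h <;> rw [h] <;> ring
  -- conclusion
  have hψdiff : DifferentiableAt ℝ ψ ξ := (key ξ hξ hεs).differentiableAt
  have hderivψ : ∀ᶠ x in nhds ξ, deriv ψ x = 2 * σ * ε * Real.sinh (s x) / c := by
    filter_upwards [hU] with x hx
    exact (key x hx.1 hx.2).deriv
  have hd2 : HasDerivAt (fun x => 2 * σ * ε * Real.sinh (s x) / c)
      (2 * σ * ε * Real.cosh (s ξ) * deriv s ξ / c) ξ := by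
    have hds : HasDerivAt s (deriv s ξ) ξ := (hs ξ hξ).hasDerivAt
    have := ((hds.sinh).const_mul (2 * σ * ε)).div_const c
    exact this.congr_deriv (by ring)
  have hd2' : HasDerivAt (deriv ψ) (2 * σ * ε * Real.cosh (s ξ) * deriv s ξ / c) ξ :=
    hd2.congr_of_eventuallyEq hderivψ
  refine ⟨hψdiff, hd2'.differentiableAt, ?_⟩
  rw [hd2'.deriv]
  obtain ⟨hg0, hg1, hgs⟩ := hgfacts ξ hξ
  have hεds : ε * deriv s ξ = Real.sqrt (1 - g ξ ^ 2) := by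
    rw [hgs, habs ξ hεs]
  have hsinψ : Real.sin (ψ ξ) = 2 * g ξ * Real.sqrt (1 - g ξ ^ 2) := by
    rcases hσ with h | h <;> rw [hψ ξ, h]
    · have : (1 + (-1:ℝ)) * Real.arcsin (g ξ) + (1 - (-1)) * Real.arccos (g ξ)
          = 2 * Real.arccos (g ξ) := by ring
      rw [this, Real.sin_two_mul, Real.sin_arccos,
        Real.cos_arccos (by linarith) hg1.le]
      try ring
    · have : (1 + (1:ℝ)) * Real.arcsin (g ξ) + (1 - 1) * Real.arccos (g ξ)
          = 2 * Real.arcsin (g ξ) := by ring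
      rw [this, Real.sin_two_mul, Real.sin_arcsin (by linarith) hg1.le,
        Real.cos_arcsin]
      try ring
  rw [hsinψ, ← hεds]
  have hgval : g ξ = Real.cosh (s ξ) / c := rfl
  rw [hgval]
  field_simp
end

section
/- Let κ > 0 and let s : I → ℝ be twice differentiable on an open interval I with s′(ξ)² = (κ² − sinh²(s(ξ)))/(κ²+1) and s″(ξ) = −sinh(s(ξ))cosh(s(ξ))/(κ²+1) for all ξ ∈ I. Define z : I → ℝ by requiring z′(ξ) = (κ² − sinh²(s(ξ)))/(κ·√(κ²+1)). If ξ_c ∈ I satisfies sinh(s(ξ_c)) = κ, then z′(ξ_c) = 0, z″(ξ_c) = 0, and z‴(ξ_c) = 2κ/√(κ²+1) > 0. -/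
/-- Cuspidal edge of Minding's bobbin: at a turning point `ξ_c` where `sinh(s(ξ_c)) = κ`,
the height function `z` (with `z′ = (κ² − sinh²(s))/(κ√(κ²+1))`) has
`z′(ξ_c) = 0`, `z″(ξ_c) = 0` and `z‴(ξ_c) = 2κ/√(κ²+1) > 0`. -/
theorem bobbin_cusp (κ a b : ℝ) (hκ : 0 < κ) (s z : ℝ → ℝ)
    (hs : ∀ ξ ∈ Set.Ioo a b, DifferentiableAt ℝ s ξ)
    (hs' : ∀ ξ ∈ Set.Ioo a b, DifferentiableAt ℝ (deriv s) ξ)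
    (h1 : ∀ ξ ∈ Set.Ioo a b,
      (deriv s ξ) ^ 2 = (κ ^ 2 - (Real.sinh (s ξ)) ^ 2) / (κ ^ 2 + 1))
    (h2 : ∀ ξ ∈ Set.Ioo a b,
      deriv (deriv s) ξ = -(Real.sinh (s ξ) * Real.cosh (s ξ)) / (κ ^ 2 + 1))
    (hz : ∀ ξ ∈ Set.Ioo a b,
      HasDerivAt z ((κ ^ 2 - (Real.sinh (s ξ)) ^ 2) / (κ * Real.sqrt (κ ^ 2 + 1))) ξ)
    (ξc : ℝ) (hξc : ξc ∈ Set.Ioo a b) (hc : Real.sinh (s ξc) = κ) :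
    deriv z ξc = 0 ∧ deriv (deriv z) ξc = 0 ∧
      deriv (deriv (deriv z)) ξc = 2 * κ / Real.sqrt (κ ^ 2 + 1) ∧
      0 < 2 * κ / Real.sqrt (κ ^ 2 + 1) := by
  have hopen : IsOpen (Set.Ioo a b) := isOpen_Ioo
  have hsq : (0:ℝ) < κ ^ 2 + 1 := by positivity
  have hsqrt : (0:ℝ) < Real.sqrt (κ ^ 2 + 1) := Real.sqrt_pos.mpr hsq
  set C : ℝ := κ * Real.sqrt (κ ^ 2 + 1) with hC
  have hCpos : 0 < C := mul_pos hκ hsqrt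
  set f : ℝ → ℝ := fun ξ => (κ ^ 2 - (Real.sinh (s ξ)) ^ 2) / C with hf
  set g : ℝ → ℝ := fun ξ =>
      -(2 * Real.sinh (s ξ) * Real.cosh (s ξ) * deriv s ξ) / C with hg
  -- deriv z agrees with f on the interval
  have hz1 : ∀ ξ ∈ Set.Ioo a b, deriv z ξ = f ξ := fun ξ hξ => (hz ξ hξ).deriv
  -- f has derivative g on the interval
  have hfd : ∀ ξ ∈ Set.Ioo a b, HasDerivAt f (g ξ) ξ := by
    intro ξ hξ
    have h := (((hs ξ hξ).hasDerivAt.sinh).pow 2).const_sub (κ ^ 2)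
    have h2' := h.div_const C
    refine h2'.congr_deriv ?_
    simp [hg]
    ring
  -- second derivative equals g on the interval
  have hz2 : ∀ ξ ∈ Set.Ioo a b, deriv (deriv z) ξ = g ξ := by
    intro ξ hξ
    have hev : deriv z =ᶠ[nhds ξ] f :=
      Filter.eventuallyEq_of_mem (hopen.mem_nhds hξ) hz1
    rw [hev.deriv_eq]
    exact (hfd ξ hξ).deriv
  -- s'(ξc) = 0
  have hs0 : deriv s ξc = 0 := by
    have h := h1 ξc hξc
    rw [hc, sub_self, zero_div] at h
    exact pow_eq_zero_iff (two_ne_zero) |>.mp h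
  -- cosh(s ξc)^2 = κ^2 + 1
  have hcosh2 : Real.cosh (s ξc) ^ 2 = κ ^ 2 + 1 := by
    rw [Real.cosh_sq', hc]; ring
  -- g has derivative at ξc
  have hgd : HasDerivAt g (2 * κ / Real.sqrt (κ ^ 2 + 1)) ξc := by
    have hsc := (hs ξc hξc).hasDerivAt
    have h' := (((hsc.sinh.mul hsc.cosh).mul
      (hs' ξc hξc).hasDerivAt).const_mul (2:ℝ)).neg.div_const C
    have hfun : g = (fun x =>
        -(2 * (Real.sinh (s x) * Real.cosh (s x) * deriv s x)) / C) := by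
      funext x; simp only [hg]; ring
    rw [hfun]
    refine h'.congr_deriv ?_
    symm
    simp only [Pi.mul_apply]
    rw [hs0, h2 ξc hξc, hc, hC]
    have hc2 : Real.cosh (s ξc) * Real.cosh (s ξc) = κ ^ 2 + 1 := by
      rw [← sq]; exact hcosh2
    field_simp
    linear_combination (-κ ^ 2) * hc2
  -- third derivative
  have hz3 : deriv (deriv (deriv z)) ξc = 2 * κ / Real.sqrt (κ ^ 2 + 1) := by
    have hev : deriv (deriv z) =ᶠ[nhds ξc] g :=
      Filter.eventuallyEq_of_mem (hopen.mem_nhds hξc) hz2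
    rw [hev.deriv_eq]
    exact hgd.deriv
  refine ⟨?_, ?_, hz3, by positivity⟩
  · rw [hz1 ξc hξc]
    simp [hf, hc]
  · rw [hz2 ξc hξc]
    simp [hg, hs0]
end

section
/- Let Z > 0 and let ψ : [0,Z] → ℝ be continuous on [0,Z], twice continuously differentiable on (0,Z], and satisfy ψ″(z) + ψ′(z)/z = sin(ψ(z)) for all z ∈ (0,Z], with z·ψ′(z) → 0 as z → 0⁺. If 0 < ψ(z) < π for all z ∈ [0,Z], then z·ψ′(z) = ∫₀ᶻ ξ·sin(ψ(ξ)) dξ for all z ∈ (0,Z]; in particular ψ′(z) > 0 for all z ∈ (0,Z], so ψ is strictly increasing on [0,Z]. -/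
open intervalIntegral

/-- Monotonicity for Painlevé III in trigonometric form: if `ψ` is continuous on `[0,Z]`,
twice continuously differentiable on `(0,Z]`, solves `ψ″ + ψ′/z = sin ψ` there with
`z·ψ′(z) → 0` as `z → 0⁺`, and `0 < ψ < π` on `[0,Z]`, then
`z·ψ′(z) = ∫₀ᶻ ξ·sin(ψ(ξ)) dξ` on `(0,Z]`; in particular `ψ′ > 0` on `(0,Z]` and
`ψ` is strictly increasing on `[0,Z]`. -/
theorem painleveIII_strictMono (Z : ℝ) (hZ : 0 < Z) (ψ : ℝ → ℝ)
    (hcont : ContinuousOn ψ (Set.Icc 0 Z))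
    (hd1 : ∀ z ∈ Set.Ioc 0 Z, DifferentiableAt ℝ ψ z)
    (hd2 : ∀ z ∈ Set.Ioc 0 Z, DifferentiableAt ℝ (deriv ψ) z)
    (hd2c : ContinuousOn (deriv (deriv ψ)) (Set.Ioc 0 Z))
    (heq : ∀ z ∈ Set.Ioc 0 Z, deriv (deriv ψ) z + deriv ψ z / z = Real.sin (ψ z))
    (hlim : Filter.Tendsto (fun z => z * deriv ψ z)
      (nhdsWithin 0 (Set.Ioi 0)) (nhds 0))
    (hrange : ∀ z ∈ Set.Icc 0 Z, 0 < ψ z ∧ ψ z < Real.pi) :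
    (∀ z ∈ Set.Ioc 0 Z,
        z * deriv ψ z = ∫ ξ in (0 : ℝ)..z, ξ * Real.sin (ψ ξ)) ∧
    (∀ z ∈ Set.Ioc 0 Z, 0 < deriv ψ z) ∧
    StrictMonoOn ψ (Set.Icc 0 Z) := by
  set k : ℝ → ℝ := fun ξ => ξ * Real.sin (ψ ξ) with hkdef
  have hkc : ContinuousOn k (Set.Icc 0 Z) :=
    continuousOn_id.mul (Real.continuous_sin.comp_continuousOn hcont)
  -- derivative of t ↦ t * ψ'(t) is k on (0,Z]
  have hderiv : ∀ x ∈ Set.Ioc 0 Z, HasDerivAt (fun t => t * deriv ψ t) (k x) x := by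
    intro x hx
    have h2 : HasDerivAt (deriv ψ) (deriv (deriv ψ) x) x := (hd2 x hx).hasDerivAt
    have hprod : HasDerivAt (fun t => t * deriv ψ t) (1 * deriv ψ x + x * deriv (deriv ψ) x) x :=
      (hasDerivAt_id x).mul h2
    have hx0 : x ≠ 0 := ne_of_gt hx.1
    have he := heq x hx
    convert hprod using 1
    have : deriv (deriv ψ) x = Real.sin (ψ x) - deriv ψ x / x := by linarith
    simp only [hkdef, this, id_eq]
    field_simp
    ring
  -- the key integral identity
  have key : ∀ z ∈ Set.Ioc 0 Z, z * deriv ψ z = ∫ ξ in (0:ℝ)..z, k ξ := by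
    intro z hz
    have hkint : ∀ a b : ℝ, a ∈ Set.Icc (0:ℝ) Z → b ∈ Set.Icc (0:ℝ) Z →
        IntervalIntegrable k MeasureTheory.volume a b := by
      intro a b ha hb
      exact (hkc.mono (Set.uIcc_subset_Icc ha hb)).intervalIntegrable
    -- for ε ∈ (0, z], FTC on [ε, z]
    have step : ∀ ε ∈ Set.Ioc (0:ℝ) z,
        (∫ ξ in ε..z, k ξ) = z * deriv ψ z - ε * deriv ψ ε := by
      intro ε hε
      refine intervalIntegral.integral_eq_sub_of_hasDerivAt (f := fun t => t * deriv ψ t) (f' := k) ?_ ?_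
      · intro x hx
        rw [Set.uIcc_of_le hε.2] at hx
        exact hderiv x ⟨lt_of_lt_of_le hε.1 hx.1, le_trans hx.2 hz.2⟩
      · exact hkint ε z ⟨le_of_lt hε.1, le_trans hε.2 hz.2⟩ ⟨le_of_lt hz.1, hz.2⟩
    -- take ε → 0⁺ along nhdsWithin 0 (Ioo 0 z)
    have hne : (nhdsWithin (0:ℝ) (Set.Ioo 0 z)).NeBot := by
      refine mem_closure_iff_nhdsWithin_neBot.mp ?_
      rw [closure_Ioo (ne_of_lt hz.1)]
      exact ⟨le_refl 0, le_of_lt hz.1⟩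
    have hzZ : z ∈ Set.Icc (0:ℝ) Z := ⟨le_of_lt hz.1, hz.2⟩
    -- LHS tendsto
    have hL : Filter.Tendsto (fun ε => ∫ ξ in ε..z, k ξ)
        (nhdsWithin (0:ℝ) (Set.Ioo 0 z)) (nhds (∫ ξ in (0:ℝ)..z, k ξ)) := by
      have hint : MeasureTheory.IntegrableOn k (Set.uIcc 0 z) MeasureTheory.volume := by
        rw [Set.uIcc_of_le (le_of_lt hz.1)]
        exact (hkc.mono (Set.Icc_subset_Icc le_rfl hz.2)).integrableOn_compact isCompact_Icc
      have hc := intervalIntegral.continuousOn_primitive_interval_left (a := 0) (b := z) hint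
      have h0 : (0:ℝ) ∈ Set.uIcc (0:ℝ) z := Set.left_mem_uIcc
      have := (hc 0 h0).tendsto
      refine this.comp ?_
      rw [tendsto_nhdsWithin_iff]
      constructor
      · exact nhdsWithin_le_nhds
      · filter_upwards [self_mem_nhdsWithin] with x hx
        rw [Set.uIcc_of_le (le_of_lt hz.1)]
        exact ⟨le_of_lt hx.1, le_of_lt hx.2⟩
    -- RHS tendsto
    have hR : Filter.Tendsto (fun ε => z * deriv ψ z - ε * deriv ψ ε)
        (nhdsWithin (0:ℝ) (Set.Ioo 0 z)) (nhds (z * deriv ψ z - 0)) := by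
      exact Filter.Tendsto.sub tendsto_const_nhds
        (hlim.mono_left (nhdsWithin_mono _ (fun x hx => hx.1)))
    have heq' : (fun ε => ∫ ξ in ε..z, k ξ) =ᶠ[nhdsWithin (0:ℝ) (Set.Ioo 0 z)]
        (fun ε => z * deriv ψ z - ε * deriv ψ ε) := by
      filter_upwards [self_mem_nhdsWithin] with ε hε
      exact step ε ⟨hε.1, le_of_lt hε.2⟩
    have := tendsto_nhds_unique (hL.congr' heq') hR
    linarith
  have pos : ∀ z ∈ Set.Ioc 0 Z, 0 < deriv ψ z := by
    intro z hz
    have hipos : 0 < ∫ ξ in (0:ℝ)..z, k ξ := by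
      refine intervalIntegral.intervalIntegral_pos_of_pos_on ?_ ?_ hz.1
      · refine ((hkc.mono (Set.Icc_subset_Icc le_rfl hz.2)).mono ?_).intervalIntegrable
        rw [Set.uIcc_of_le (le_of_lt hz.1)]
      · intro x hx
        have hxI : x ∈ Set.Icc (0:ℝ) Z :=
          ⟨le_of_lt hx.1, le_trans (le_of_lt hx.2) hz.2⟩
        have := hrange x hxI
        exact mul_pos hx.1 (Real.sin_pos_of_pos_of_lt_pi this.1 this.2)
    have := key z hz
    have hzpos := hz.1
    nlinarith
  refine ⟨key, pos, ?_⟩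
  refine strictMonoOn_of_deriv_pos (convex_Icc 0 Z) hcont ?_
  intro x hx
  rw [interior_Icc] at hx
  exact pos x ⟨hx.1, le_of_lt hx.2⟩
end

section
/- Let 0 < φ₀ ≤ φ* < π, set C = √(sin(φ*)/φ*), and let Z > 0. Let ψ, u, w : [0,Z] → ℝ be continuous on [0,Z], twice continuously differentiable on (0,Z], with ψ(0) = u(0) = w(0) = φ₀, and with z·ψ′(z), z·u′(z), z·w′(z) all tending to 0 as z → 0⁺. Suppose that for z ∈ (0,Z]: ψ″(z) + ψ′(z)/z = sin(ψ(z)), u″(z) + u′(z)/z = C²·u(z), and w″(z) + w′(z)/z = w(z). If 0 < ψ(z) ≤ φ* for all z ∈ [0,Z], then u(z) ≤ ψ(z) ≤ w(z) for all z ∈ [0,Z]. -/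
open Set Filter Real

/-- If `f` is differentiable with nonpositive derivative on `(0,Z]` and tends to `L`
at `0⁺`, then `f ≤ L` on `(0,Z]`. -/
lemma aux_le_of_deriv_nonpos (f : ℝ → ℝ) {Z L : ℝ}
    (hd : ∀ z ∈ Set.Ioc 0 Z, DifferentiableAt ℝ f z)
    (hd' : ∀ z ∈ Set.Ioc 0 Z, deriv f z ≤ 0)
    (hlim : Tendsto f (nhdsWithin 0 (Set.Ioi 0)) (nhds L)) :
    ∀ z ∈ Set.Ioc 0 Z, f z ≤ L := by
  intro z hz
  have key : ∀ a ∈ Set.Ioo (0:ℝ) z, f z ≤ f a := by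
    intro a ha
    have hsub : Set.Icc a z ⊆ Set.Ioc 0 Z :=
      fun t ht => ⟨lt_of_lt_of_le ha.1 ht.1, le_trans ht.2 hz.2⟩
    have hanti : AntitoneOn f (Set.Icc a z) := by
      apply antitoneOn_of_deriv_nonpos (convex_Icc a z)
      · exact fun t ht => ((hd t (hsub ht)).continuousAt).continuousWithinAt
      · intro t ht
        rw [interior_Icc] at ht
        exact (hd t (hsub ⟨le_of_lt ht.1, le_of_lt ht.2⟩)).differentiableWithinAt
      · intro t ht
        rw [interior_Icc] at ht
        exact hd' t (hsub ⟨le_of_lt ht.1, le_of_lt ht.2⟩)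
    exact hanti ⟨le_refl a, le_of_lt ha.2⟩ ⟨le_of_lt ha.2, le_refl z⟩ (le_of_lt ha.2)
  refine ge_of_tendsto hlim ?_
  filter_upwards [Ioo_mem_nhdsGT_of_mem (Set.mem_Ico.mpr ⟨le_refl (0:ℝ), hz.1⟩)] with a ha
  exact key a ha

lemma aux_ge_of_deriv_nonneg (f : ℝ → ℝ) {Z L : ℝ}
    (hd : ∀ z ∈ Set.Ioc 0 Z, DifferentiableAt ℝ f z)
    (hd' : ∀ z ∈ Set.Ioc 0 Z, 0 ≤ deriv f z)
    (hlim : Tendsto f (nhdsWithin 0 (Set.Ioi 0)) (nhds L)) :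
    ∀ z ∈ Set.Ioc 0 Z, L ≤ f z := by
  intro z hz
  have h := aux_le_of_deriv_nonpos (fun t => -f t) (Z := Z) (L := -L)
    (fun t ht => (hd t ht).neg)
    (fun t ht => by
      rw [deriv.fun_neg]
      simpa using hd' t ht)
    (hlim.neg) z hz
  simpa using h

/-- Positivity lemma: a solution of `v'' + v'/z = k·v` with `k > 0`, `v 0 = φ₀ > 0`
and `z·v'(z) → 0` stays positive. -/
lemma aux_positive (v : ℝ → ℝ) {Z k φ₀ : ℝ} (hk : 0 < k) (hZ : 0 < Z) (hφ₀ : 0 < φ₀)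
    (hvc : ContinuousOn v (Set.Icc 0 Z))
    (hd1 : ∀ z ∈ Set.Ioc 0 Z, DifferentiableAt ℝ v z)
    (hd2 : ∀ z ∈ Set.Ioc 0 Z, DifferentiableAt ℝ (deriv v) z)
    (hv0 : v 0 = φ₀)
    (hvlim : Tendsto (fun z => z * deriv v z) (nhdsWithin 0 (Set.Ioi 0)) (nhds 0))
    (hveq : ∀ z ∈ Set.Ioc 0 Z, deriv (deriv v) z + deriv v z / z = k * v z) :
    ∀ z ∈ Set.Icc 0 Z, 0 < v z := by
  -- derivative of g(z) = z * v'(z)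
  have hg : ∀ z ∈ Set.Ioc 0 Z,
      HasDerivAt (fun t => t * deriv v t) (z * (k * v z)) z := by
    intro z hz
    have h := (hasDerivAt_id z).mul ((hd2 z hz).hasDerivAt)
    have hzne : z ≠ 0 := ne_of_gt hz.1
    have hode := hveq z hz
    have : (1:ℝ) * deriv v z + z * deriv (deriv v) z = z * (k * v z) := by
      field_simp at hode ⊢
      nlinarith [hode]
    simp only [id_eq] at h
    rwa [this] at h
  by_contra hcon
  push_neg at hcon
  obtain ⟨z₀, hz₀, hvz₀⟩ := hcon
  -- the set where v ≤ 0
  set S : Set ℝ := Set.Icc 0 Z ∩ v ⁻¹' Set.Iic 0 with hS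
  have hSne : S.Nonempty := ⟨z₀, hz₀, hvz₀⟩
  have hSclosed : IsClosed S :=
    hvc.preimage_isClosed_of_isClosed isClosed_Icc isClosed_Iic
  have hSbdd : BddBelow S := ⟨0, fun t ht => ht.1.1⟩
  set z₁ := sInf S with hz₁def
  have hz₁S : z₁ ∈ S := hSclosed.csInf_mem hSne hSbdd
  have hz₁Z : z₁ ≤ Z := hz₁S.1.2
  have hz₁pos : 0 < z₁ := by
    rcases lt_or_eq_of_le hz₁S.1.1 with h | h
    · exact h
    · exfalso
      have hv1 : v z₁ ≤ 0 := hz₁S.2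
      rw [← h, hv0] at hv1; linarith
  have hvpos : ∀ t ∈ Set.Ico (0:ℝ) z₁, 0 < v t := by
    intro t ht
    by_contra h
    push_neg at h
    have : t ∈ S := ⟨⟨ht.1, le_trans (le_of_lt ht.2) hz₁Z⟩, h⟩
    exact absurd (csInf_le hSbdd this) (not_le.mpr ht.2)
  -- v' ≥ 0 on (0, z₁)
  have hderiv_nonneg : ∀ t ∈ Set.Ioo (0:ℝ) z₁, 0 ≤ deriv v t := by
    intro t ht
    have htZ : t ∈ Set.Ioc 0 Z := ⟨ht.1, le_trans (le_of_lt ht.2) hz₁Z⟩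
    -- apply aux_ge on (0, t]
    have hsub : Set.Ioc (0:ℝ) t ⊆ Set.Ioc 0 Z :=
      fun s hs => ⟨hs.1, le_trans hs.2 htZ.2⟩
    have hge := aux_ge_of_deriv_nonneg (fun s => s * deriv v s) (Z := t) (L := 0)
      (fun s hs => (hg s (hsub hs)).differentiableAt)
      (fun s hs => by
        rw [(hg s (hsub hs)).deriv]
        have hv : 0 < v s := hvpos s ⟨le_of_lt hs.1, lt_of_le_of_lt hs.2 ht.2⟩
        exact le_of_lt (mul_pos hs.1 (mul_pos hk hv)))
      hvlim t ⟨ht.1, le_refl t⟩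
    have hge' : 0 ≤ t * deriv v t := hge
    by_contra hneg
    push_neg at hneg
    nlinarith [ht.1]
  -- v is monotone on [z₁/2, z₁], so v z₁ ≥ v (z₁/2) > 0, contradiction
  have ha : z₁ / 2 ∈ Set.Ico (0:ℝ) z₁ := ⟨by positivity, by linarith⟩
  have hsub2 : Set.Icc (z₁/2) z₁ ⊆ Set.Icc 0 Z :=
    fun t ht => ⟨le_trans ha.1 ht.1, le_trans ht.2 hz₁Z⟩
  have hmono : MonotoneOn v (Set.Icc (z₁/2) z₁) := by
    apply monotoneOn_of_deriv_nonneg (convex_Icc _ _)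
    · exact hvc.mono hsub2
    · intro t ht
      rw [interior_Icc] at ht
      have ht0 : 0 < t := by linarith [ht.1, hz₁pos]
      exact (hd1 t ⟨ht0, le_trans (le_of_lt ht.2) hz₁Z⟩).differentiableWithinAt
    · intro t ht
      rw [interior_Icc] at ht
      exact hderiv_nonneg t ⟨by linarith [ht.1, hz₁pos], ht.2⟩
  have h1 : v (z₁/2) ≤ v z₁ :=
    hmono ⟨le_refl _, by linarith⟩ ⟨by linarith, le_refl _⟩ (by linarith)
  have h2 : 0 < v (z₁/2) := hvpos _ ha
  have h3 : v z₁ ≤ 0 := hz₁S.2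
  linarith

/-- Bessel comparison for Painlevé III: with `C = √(sin φ*/φ*)`, if `ψ` solves
`ψ″ + ψ′/z = sin ψ`, `u` solves `u″ + u′/z = C²u` and `w` solves `w″ + w′/z = w`
on `(0,Z]`, all three continuous on `[0,Z]` with value `φ₀` at `0` and
`z·(derivative)(z) → 0` as `z → 0⁺`, and if `0 < ψ ≤ φ*` on `[0,Z]`,
then `u ≤ ψ ≤ w` on `[0,Z]`. -/
theorem painleveIII_bessel_comparison (φ₀ φs Z : ℝ)
    (hφ₀ : 0 < φ₀) (hφ₀s : φ₀ ≤ φs) (hφs : φs < Real.pi) (hZ : 0 < Z)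
    (C : ℝ) (hC : C = Real.sqrt (Real.sin φs / φs))
    (ψ u w : ℝ → ℝ)
    (hψc : ContinuousOn ψ (Set.Icc 0 Z))
    (huc : ContinuousOn u (Set.Icc 0 Z))
    (hwc : ContinuousOn w (Set.Icc 0 Z))
    (hψd1 : ∀ z ∈ Set.Ioc 0 Z, DifferentiableAt ℝ ψ z)
    (hψd2 : ∀ z ∈ Set.Ioc 0 Z, DifferentiableAt ℝ (deriv ψ) z)
    (hψd2c : ContinuousOn (deriv (deriv ψ)) (Set.Ioc 0 Z))
    (hud1 : ∀ z ∈ Set.Ioc 0 Z, DifferentiableAt ℝ u z)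
    (hud2 : ∀ z ∈ Set.Ioc 0 Z, DifferentiableAt ℝ (deriv u) z)
    (hud2c : ContinuousOn (deriv (deriv u)) (Set.Ioc 0 Z))
    (hwd1 : ∀ z ∈ Set.Ioc 0 Z, DifferentiableAt ℝ w z)
    (hwd2 : ∀ z ∈ Set.Ioc 0 Z, DifferentiableAt ℝ (deriv w) z)
    (hwd2c : ContinuousOn (deriv (deriv w)) (Set.Ioc 0 Z))
    (hψ0 : ψ 0 = φ₀) (hu0 : u 0 = φ₀) (hw0 : w 0 = φ₀)
    (hψlim : Filter.Tendsto (fun z => z * deriv ψ z)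
      (nhdsWithin 0 (Set.Ioi 0)) (nhds 0))
    (hulim : Filter.Tendsto (fun z => z * deriv u z)
      (nhdsWithin 0 (Set.Ioi 0)) (nhds 0))
    (hwlim : Filter.Tendsto (fun z => z * deriv w z)
      (nhdsWithin 0 (Set.Ioi 0)) (nhds 0))
    (hψeq : ∀ z ∈ Set.Ioc 0 Z, deriv (deriv ψ) z + deriv ψ z / z = Real.sin (ψ z))
    (hueq : ∀ z ∈ Set.Ioc 0 Z, deriv (deriv u) z + deriv u z / z = C ^ 2 * u z)
    (hweq : ∀ z ∈ Set.Ioc 0 Z, deriv (deriv w) z + deriv w z / z = w z)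
    (hψrange : ∀ z ∈ Set.Icc 0 Z, 0 < ψ z ∧ ψ z ≤ φs) :
    ∀ z ∈ Set.Icc 0 Z, u z ≤ ψ z ∧ ψ z ≤ w z := by
  have hφspos : 0 < φs := lt_of_lt_of_le hφ₀ hφ₀s
  have hsinφs : 0 < Real.sin φs := Real.sin_pos_of_pos_of_lt_pi hφspos hφs
  have hC2 : C ^ 2 = Real.sin φs / φs := by
    rw [hC]; exact Real.sq_sqrt (by positivity)
  have hC2pos : 0 < C ^ 2 := by rw [hC2]; positivity
  -- concavity bound: C²·φ ≤ sin φ for 0 < φ ≤ φs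
  have hconcave : ∀ φ : ℝ, 0 < φ → φ ≤ φs → C ^ 2 * φ ≤ Real.sin φ := by
    intro φ hφ hφs'
    have hcc := strictConcaveOn_sin_Icc.concaveOn
    have ht0 : (0:ℝ) ≤ φ / φs := by positivity
    have ht1 : φ / φs ≤ 1 := (div_le_one hφspos).mpr hφs'
    have := hcc.2 (Set.mem_Icc.mpr ⟨le_refl 0, Real.pi_pos.le⟩)
      (Set.mem_Icc.mpr ⟨hφspos.le, hφs.le⟩)
      (by linarith : (0:ℝ) ≤ 1 - φ / φs) ht0 (by ring)
    simp only [smul_eq_mul, mul_zero, Real.sin_zero, zero_add] at this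
    have hφeq : (φ / φs) * φs = φ := div_mul_cancel₀ φ (ne_of_gt hφspos)
    rw [hφeq] at this
    calc C ^ 2 * φ = (φ / φs) * Real.sin φs := by rw [hC2]; field_simp
      _ ≤ Real.sin φ := this
  -- positivity of u and w
  have hupos : ∀ z ∈ Set.Icc 0 Z, 0 < u z :=
    aux_positive u hC2pos hZ hφ₀ huc hud1 hud2 hu0 hulim hueq
  have hwpos : ∀ z ∈ Set.Icc 0 Z, 0 < w z :=
    aux_positive w one_pos hZ hφ₀ hwc hwd1 hwd2 hw0 hwlim
      (fun z hz => by simpa using hweq z hz)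
  -- limits of the functions themselves at 0⁺
  have hlim_of : ∀ (f : ℝ → ℝ), ContinuousOn f (Set.Icc 0 Z) → f 0 = φ₀ →
      Tendsto f (nhdsWithin 0 (Set.Ioi 0)) (nhds φ₀) := by
    intro f hfc hf0
    have h1 : Tendsto f (nhdsWithin 0 (Set.Icc 0 Z)) (nhds φ₀) := by
      have := (hfc 0 ⟨le_refl 0, hZ.le⟩)
      rw [ContinuousWithinAt, hf0] at this
      exact this
    have h2 : nhdsWithin (0:ℝ) (Set.Ioi 0) = nhdsWithin 0 (Set.Ioc 0 Z) :=
      (nhdsWithin_Ioc_eq_nhdsGT hZ).symm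
    rw [h2]
    exact h1.mono_left (nhdsWithin_mono 0 Set.Ioc_subset_Icc_self)
  have hψl := hlim_of ψ hψc hψ0
  have hul := hlim_of u huc hu0
  have hwl := hlim_of w hwc hw0
  -- generic Wronskian derivative
  have hwron : ∀ (p q A B : ℝ → ℝ),
      (∀ z ∈ Set.Ioc 0 Z, DifferentiableAt ℝ p z) →
      (∀ z ∈ Set.Ioc 0 Z, DifferentiableAt ℝ (deriv p) z) →
      (∀ z ∈ Set.Ioc 0 Z, DifferentiableAt ℝ q z) →
      (∀ z ∈ Set.Ioc 0 Z, DifferentiableAt ℝ (deriv q) z) →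
      (∀ z ∈ Set.Ioc 0 Z, deriv (deriv p) z + deriv p z / z = A z) →
      (∀ z ∈ Set.Ioc 0 Z, deriv (deriv q) z + deriv q z / z = B z) →
      ∀ z ∈ Set.Ioc 0 Z,
        HasDerivAt (fun t => t * (deriv p t * q t - p t * deriv q t))
          (z * (A z * q z - p z * B z)) z := by
    intro p q A B hp1 hp2 hq1 hq2 hpe hqe z hz
    have hzne : z ≠ 0 := ne_of_gt hz.1
    have hinner : HasDerivAt (fun t => deriv p t * q t - p t * deriv q t)
        ((deriv (deriv p) z * q z + deriv p z * deriv q z)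
          - (deriv p z * deriv q z + p z * deriv (deriv q) z)) z :=
      (((hp2 z hz).hasDerivAt.mul (hq1 z hz).hasDerivAt)).sub
        (((hp1 z hz).hasDerivAt.mul (hq2 z hz).hasDerivAt))
    have h := (hasDerivAt_id z).mul hinner
    have he1 := hpe z hz
    have he2 := hqe z hz
    have halg : (1:ℝ) * (deriv p z * q z - p z * deriv q z)
        + z * ((deriv (deriv p) z * q z + deriv p z * deriv q z)
          - (deriv p z * deriv q z + p z * deriv (deriv q) z))
        = z * (A z * q z - p z * B z) := by
      have e1 : deriv (deriv p) z = A z - deriv p z / z := by linarith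
      have e2 : deriv (deriv q) z = B z - deriv q z / z := by linarith
      rw [e1, e2]
      field_simp
      ring
    simp only [id_eq] at h
    rwa [halg] at h
  -- ===== u ≤ ψ =====
  have hW1 := hwron u ψ (fun z => C ^ 2 * u z) (fun z => Real.sin (ψ z))
    hud1 hud2 hψd1 hψd2 hueq hψeq
  have hW1le : ∀ z ∈ Set.Ioc 0 Z,
      z * (deriv u z * ψ z - u z * deriv ψ z) ≤ 0 := by
    apply aux_le_of_deriv_nonpos
    · exact fun z hz => (hW1 z hz).differentiableAt
    · intro z hz
      rw [(hW1 z hz).deriv]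
      show z * (C ^ 2 * u z * ψ z - u z * Real.sin (ψ z)) ≤ 0
      have hu := hupos z (Set.Ioc_subset_Icc_self hz)
      have hψr := hψrange z (Set.Ioc_subset_Icc_self hz)
      have hsin := hconcave (ψ z) hψr.1 hψr.2
      have : C ^ 2 * u z * ψ z - u z * Real.sin (ψ z) ≤ 0 := by nlinarith
      nlinarith [hz.1]
    · have : Tendsto (fun z => (z * deriv u z) * ψ z - u z * (z * deriv ψ z))
          (nhdsWithin 0 (Set.Ioi 0)) (nhds (0 * φ₀ - φ₀ * 0)) :=
        (hulim.mul hψl).sub (hul.mul hψlim)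
      simp only [zero_mul, mul_zero, sub_zero] at this
      refine this.congr (fun z => by ring)
  -- ===== ψ ≤ w =====
  have hW2 := hwron ψ w (fun z => Real.sin (ψ z)) w
    hψd1 hψd2 hwd1 hwd2 hψeq (fun z hz => by simpa using hweq z hz)
  have hW2le : ∀ z ∈ Set.Ioc 0 Z,
      z * (deriv ψ z * w z - ψ z * deriv w z) ≤ 0 := by
    apply aux_le_of_deriv_nonpos
    · exact fun z hz => (hW2 z hz).differentiableAt
    · intro z hz
      rw [(hW2 z hz).deriv]
      show z * (Real.sin (ψ z) * w z - ψ z * w z) ≤ 0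
      have hw := hwpos z (Set.Ioc_subset_Icc_self hz)
      have hψr := hψrange z (Set.Ioc_subset_Icc_self hz)
      have hsin : Real.sin (ψ z) ≤ ψ z := Real.sin_le hψr.1.le
      have : Real.sin (ψ z) * w z - ψ z * w z ≤ 0 := by nlinarith
      nlinarith [hz.1]
    · have : Tendsto (fun z => (z * deriv ψ z) * w z - ψ z * (z * deriv w z))
          (nhdsWithin 0 (Set.Ioi 0)) (nhds (0 * φ₀ - φ₀ * 0)) :=
        (hψlim.mul hwl).sub (hψl.mul hwlim)
      simp only [zero_mul, mul_zero, sub_zero] at this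
      refine this.congr (fun z => by ring)
  -- ratio arguments
  have hratio : ∀ (p q : ℝ → ℝ),
      (∀ z ∈ Set.Ioc 0 Z, DifferentiableAt ℝ p z) →
      (∀ z ∈ Set.Ioc 0 Z, DifferentiableAt ℝ q z) →
      (∀ z ∈ Set.Icc 0 Z, 0 < q z) →
      (∀ z ∈ Set.Ioc 0 Z, z * (deriv p z * q z - p z * deriv q z) ≤ 0) →
      Tendsto p (nhdsWithin 0 (Set.Ioi 0)) (nhds φ₀) →
      Tendsto q (nhdsWithin 0 (Set.Ioi 0)) (nhds φ₀) →
      ∀ z ∈ Set.Ioc 0 Z, p z ≤ q z := by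
    intro p q hp1 hq1 hqpos hWle hpl hql z hz
    have hder : ∀ t ∈ Set.Ioc 0 Z,
        HasDerivAt (fun s => p s / q s)
          ((deriv p t * q t - p t * deriv q t) / q t ^ 2) t := by
      intro t ht
      exact (hp1 t ht).hasDerivAt.div (hq1 t ht).hasDerivAt
        (ne_of_gt (hqpos t (Set.Ioc_subset_Icc_self ht)))
    have hle := aux_le_of_deriv_nonpos (fun s => p s / q s) (Z := Z) (L := 1)
      (fun t ht => (hder t ht).differentiableAt)
      (fun t ht => by
        rw [(hder t ht).deriv]
        have hq := hqpos t (Set.Ioc_subset_Icc_self ht)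
        have hnum : deriv p t * q t - p t * deriv q t ≤ 0 := by
          have := hWle t ht
          nlinarith [ht.1]
        have hq2 : (0:ℝ) < q t ^ 2 := by positivity
        exact div_nonpos_of_nonpos_of_nonneg hnum hq2.le)
      (by
        have := hpl.div hql (ne_of_gt hφ₀)
        rw [div_self (ne_of_gt hφ₀)] at this; exact this)
      z hz
    have hq := hqpos z (Set.Ioc_subset_Icc_self hz)
    exact (div_le_one hq).mp hle
  intro z hz
  rcases eq_or_lt_of_le hz.1 with h0 | h0
  · constructor <;> simp [← h0, hψ0, hu0, hw0]
  · have hz' : z ∈ Set.Ioc 0 Z := ⟨h0, hz.2⟩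
    refine ⟨hratio u ψ hud1 hψd1 (fun t ht => (hψrange t ht).1) hW1le hul hψl z hz',
      hratio ψ w hψd1 hwd1 hwpos hW2le hψl hwl z hz'⟩
end

section
/- Let u₀ ≤ u₁ and v₀ ≤ v₁ be real numbers and let φ : [u₀,u₁] × [v₀,v₁] → ℝ be continuous with continuous partial derivative ∂_u φ and continuous mixed partial derivative ∂_v∂_u φ satisfying ∂_v∂_u φ(u,v) = sin(φ(u,v)) on the rectangle. If in addition 0 < φ(u,v) < π for all (u,v) in the closed rectangle, then ∫_{u₀}^{u₁} ∫_{v₀}^{v₁} sin(φ(u,v)) dv du < 2π. -/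
open intervalIntegral

/-- The area of an immersed asymptotic quadrilateral is less than `2π`: if `φ` on the
rectangle `[u₀,u₁] × [v₀,v₁]` is continuous with continuous partial derivative
`∂_u φ = φu`, continuous mixed partial `∂_v ∂_u φ = sin φ`, and `0 < φ < π` on the
rectangle, then `∫∫ sin φ < 2π`. -/
theorem area_asymptotic_quadrilateral_lt_two_pi (u₀ u₁ v₀ v₁ : ℝ)
    (hu : u₀ ≤ u₁) (hv : v₀ ≤ v₁)
    (φ φu : ℝ → ℝ → ℝ)
    (hc : ContinuousOn (fun p : ℝ × ℝ => φ p.1 p.2) (Set.Icc u₀ u₁ ×ˢ Set.Icc v₀ v₁))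
    (hcu : ContinuousOn (fun p : ℝ × ℝ => φu p.1 p.2) (Set.Icc u₀ u₁ ×ˢ Set.Icc v₀ v₁))
    (hd : ∀ u ∈ Set.Icc u₀ u₁, ∀ v ∈ Set.Icc v₀ v₁,
      HasDerivWithinAt (fun t => φ t v) (φu u v) (Set.Icc u₀ u₁) u)
    (hm : ∀ u ∈ Set.Icc u₀ u₁, ∀ v ∈ Set.Icc v₀ v₁,
      HasDerivWithinAt (fun t => φu u t) (Real.sin (φ u v)) (Set.Icc v₀ v₁) v)
    (hrange : ∀ u ∈ Set.Icc u₀ u₁, ∀ v ∈ Set.Icc v₀ v₁,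
      0 < φ u v ∧ φ u v < Real.pi) :
    (∫ u in u₀..u₁, ∫ v in v₀..v₁, Real.sin (φ u v)) < 2 * Real.pi := by
  have hu00 : u₀ ∈ Set.Icc u₀ u₁ := Set.left_mem_Icc.2 hu
  have hu11 : u₁ ∈ Set.Icc u₀ u₁ := Set.right_mem_Icc.2 hu
  have hv00 : v₀ ∈ Set.Icc v₀ v₁ := Set.left_mem_Icc.2 hv
  have hv11 : v₁ ∈ Set.Icc v₀ v₁ := Set.right_mem_Icc.2 hv
  -- continuity of slices
  have hslice_u : ∀ v ∈ Set.Icc v₀ v₁, ContinuousOn (fun u => φ u v) (Set.Icc u₀ u₁) := by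
    intro v hvm
    exact hc.comp (continuousOn_id.prodMk continuousOn_const)
      (fun u hum => Set.mk_mem_prod hum hvm)
  have hslice_uu : ∀ v ∈ Set.Icc v₀ v₁, ContinuousOn (fun u => φu u v) (Set.Icc u₀ u₁) := by
    intro v hvm
    exact hcu.comp (continuousOn_id.prodMk continuousOn_const)
      (fun u hum => Set.mk_mem_prod hum hvm)
  have hslice_vu : ∀ u ∈ Set.Icc u₀ u₁, ContinuousOn (fun v => φu u v) (Set.Icc v₀ v₁) := by
    intro u hum
    exact hcu.comp (continuousOn_const.prodMk continuousOn_id)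
      (fun v hvm => Set.mk_mem_prod hum hvm)
  have hslice_v : ∀ u ∈ Set.Icc u₀ u₁, ContinuousOn (fun v => φ u v) (Set.Icc v₀ v₁) := by
    intro u hum
    exact hc.comp (continuousOn_const.prodMk continuousOn_id)
      (fun v hvm => Set.mk_mem_prod hum hvm)
  -- inner integral
  have hinner : ∀ u ∈ Set.Icc u₀ u₁,
      (∫ v in v₀..v₁, Real.sin (φ u v)) = φu u v₁ - φu u v₀ := by
    intro u hum
    apply integral_eq_sub_of_hasDerivAt_of_le hv (hslice_vu u hum)
    · intro v hvm
      exact (hm u hum v (Set.mem_Icc_of_Ioo hvm)).hasDerivAt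
        (Icc_mem_nhds hvm.1 hvm.2)
    · exact ((Real.continuous_sin.comp_continuousOn (hslice_v u hum)).intervalIntegrable_of_Icc hv)
  have hrw : (∫ u in u₀..u₁, ∫ v in v₀..v₁, Real.sin (φ u v))
      = ∫ u in u₀..u₁, (φu u v₁ - φu u v₀) := by
    apply intervalIntegral.integral_congr
    intro u hum
    rw [Set.uIcc_of_le hu] at hum
    exact hinner u hum
  have houter : ∀ v ∈ Set.Icc v₀ v₁,
      (∫ u in u₀..u₁, φu u v) = φ u₁ v - φ u₀ v := by
    intro v hvm
    apply integral_eq_sub_of_hasDerivAt_of_le hu (hslice_u v hvm)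
    · intro u hum
      exact (hd u (Set.mem_Icc_of_Ioo hum) v hvm).hasDerivAt
        (Icc_mem_nhds hum.1 hum.2)
    · exact (hslice_uu v hvm).intervalIntegrable_of_Icc hu
  have hint1 : IntervalIntegrable (fun u => φu u v₁) MeasureTheory.volume u₀ u₁ :=
    (hslice_uu v₁ hv11).intervalIntegrable_of_Icc hu
  have hint0 : IntervalIntegrable (fun u => φu u v₀) MeasureTheory.volume u₀ u₁ :=
    (hslice_uu v₀ hv00).intervalIntegrable_of_Icc hu
  rw [hrw, intervalIntegral.integral_sub hint1 hint0, houter v₁ hv11, houter v₀ hv00]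
  obtain ⟨h1, h2⟩ := hrange u₁ hu11 v₁ hv11
  obtain ⟨h3, h4⟩ := hrange u₀ hu00 v₁ hv11
  obtain ⟨h5, h6⟩ := hrange u₁ hu11 v₀ hv00
  obtain ⟨h7, h8⟩ := hrange u₀ hu00 v₀ hv00
  linarith
end

section
/- Let U ⊆ ℝ² be open and let N : U → ℝ³ be twice continuously differentiable with (∂_u∂_v N)(p) × N(p) = 0 for all p ∈ U (cross product in ℝ³). Then the two vector fields p ↦ ∂_u N(p) × N(p) and p ↦ −∂_v N(p) × N(p) satisfy ∂_v(∂_u N × N) = ∂_u(−∂_v N × N) = ∂_u N × ∂_v N on U. -/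
/-- The cross product of two vectors in `ℝ³` (Euclidean space). -/
noncomputable def cross3 (x y : EuclideanSpace ℝ (Fin 3)) : EuclideanSpace ℝ (Fin 3) :=
  WithLp.toLp 2 ![x 1 * y 2 - x 2 * y 1, x 2 * y 0 - x 0 * y 2, x 0 * y 1 - x 1 * y 0]

/-- Partial derivative in the first (`u`) variable. -/
noncomputable def pderivU (f : ℝ × ℝ → EuclideanSpace ℝ (Fin 3)) (p : ℝ × ℝ) :
    EuclideanSpace ℝ (Fin 3) :=
  deriv (fun t => f (t, p.2)) p.1

/-- Partial derivative in the second (`v`) variable. -/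
noncomputable def pderivV (f : ℝ × ℝ → EuclideanSpace ℝ (Fin 3)) (p : ℝ × ℝ) :
    EuclideanSpace ℝ (Fin 3) :=
  deriv (fun t => f (p.1, t)) p.2

lemma cross3_antisymm (x y : EuclideanSpace ℝ (Fin 3)) : cross3 x y = - cross3 y x := by
  ext i
  fin_cases i <;> simp [cross3] <;> ring

lemma hasDerivAt_cross3 {f g : ℝ → EuclideanSpace ℝ (Fin 3)} {f' g' : EuclideanSpace ℝ (Fin 3)}
    {t : ℝ} (hf : HasDerivAt f f' t) (hg : HasDerivAt g g' t) :
    HasDerivAt (fun s => cross3 (f s) (g s)) (cross3 f' (g t) + cross3 (f t) g') t := by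
  have hfi : ∀ i, HasDerivAt (fun s => f s i) (f' i) t := fun i =>
    (EuclideanSpace.proj (𝕜 := ℝ) i).hasFDerivAt.comp_hasDerivAt t hf
  have hgi : ∀ i, HasDerivAt (fun s => g s i) (g' i) t := fun i =>
    (EuclideanSpace.proj (𝕜 := ℝ) i).hasFDerivAt.comp_hasDerivAt t hg
  set L := PiLp.continuousLinearEquiv 2 ℝ (fun _ : Fin 3 => ℝ) with hL
  have key : HasDerivAt (fun s => L (cross3 (f s) (g s)))
      (L (cross3 f' (g t) + cross3 (f t) g')) t := by
    rw [hasDerivAt_pi]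
    intro i
    fin_cases i
    · have h := ((hfi 1).mul (hgi 2)).sub ((hfi 2).mul (hgi 1))
      have e : f' 1 * g t 2 + f t 1 * g' 2 - (f' 2 * g t 1 + f t 2 * g' 1)
          = (f' 1 * g t 2 - f' 2 * g t 1) + (f t 1 * g' 2 - f t 2 * g' 1) := by ring
      rw [e] at h
      simpa [hL, cross3, PiLp.add_apply, Pi.mul_def, Pi.sub_def] using h
    · have h := ((hfi 2).mul (hgi 0)).sub ((hfi 0).mul (hgi 2))
      have e : f' 2 * g t 0 + f t 2 * g' 0 - (f' 0 * g t 2 + f t 0 * g' 2)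
          = (f' 2 * g t 0 - f' 0 * g t 2) + (f t 2 * g' 0 - f t 0 * g' 2) := by ring
      rw [e] at h
      simpa [hL, cross3, PiLp.add_apply, Pi.mul_def, Pi.sub_def] using h
    · have h := ((hfi 0).mul (hgi 1)).sub ((hfi 1).mul (hgi 0))
      have e : f' 0 * g t 1 + f t 0 * g' 1 - (f' 1 * g t 0 + f t 1 * g' 0)
          = (f' 0 * g t 1 - f' 1 * g t 0) + (f t 0 * g' 1 - f t 1 * g' 0) := by ring
      rw [e] at h
      simpa [hL, cross3, PiLp.add_apply, Pi.mul_def, Pi.sub_def] using h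
  have := L.symm.hasFDerivAt.comp_hasDerivAt t key
  have e2 : (⇑L.symm ∘ fun s => L (cross3 (f s) (g s))) = fun s => cross3 (f s) (g s) := by
    funext s; simp
  rw [e2] at this
  exact this

lemma pderivU_eq {N : ℝ × ℝ → EuclideanSpace ℝ (Fin 3)} {p : ℝ × ℝ}
    (h : DifferentiableAt ℝ N p) : pderivU N p = fderiv ℝ N p (1, 0) := by
  have hline : HasDerivAt (fun t : ℝ => ((t, p.2) : ℝ × ℝ)) ((1, 0) : ℝ × ℝ) p.1 :=
    (hasDerivAt_id p.1).prodMk (hasDerivAt_const p.1 p.2)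
  exact (h.hasFDerivAt.comp_hasDerivAt p.1 hline).deriv

lemma pderivV_eq {N : ℝ × ℝ → EuclideanSpace ℝ (Fin 3)} {p : ℝ × ℝ}
    (h : DifferentiableAt ℝ N p) : pderivV N p = fderiv ℝ N p (0, 1) := by
  have hline : HasDerivAt (fun t : ℝ => ((p.1, t) : ℝ × ℝ)) ((0, 1) : ℝ × ℝ) p.2 :=
    (hasDerivAt_const p.2 p.1).prodMk (hasDerivAt_id p.2)
  exact (h.hasFDerivAt.comp_hasDerivAt p.2 hline).deriv

/-- Compatibility of the Lelieuvre formulae: if `N` is C² on an open set `U ⊆ ℝ²` and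
Lorentz harmonic, i.e. `(∂_u∂_v N) × N = 0` on `U`, then the two Lelieuvre vector fields
`∂_u N × N` and `−∂_v N × N` satisfy
`∂_v(∂_u N × N) = ∂_u(−∂_v N × N) = ∂_u N × ∂_v N` on `U`. -/
theorem lelieuvre_compatibility (U : Set (ℝ × ℝ)) (hU : IsOpen U)
    (N : ℝ × ℝ → EuclideanSpace ℝ (Fin 3))
    (hN : ContDiffOn ℝ 2 N U)
    (hharm : ∀ p ∈ U, cross3 (pderivU (fun q => pderivV N q) p) (N p) = 0) :
    ∀ p ∈ U,
      pderivV (fun q => cross3 (pderivU N q) (N q)) p =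
        cross3 (pderivU N p) (pderivV N p) ∧
      pderivU (fun q => -cross3 (pderivV N q) (N q)) p =
        cross3 (pderivU N p) (pderivV N p) := by
  intro p hp
  have hdiff : ∀ q ∈ U, DifferentiableAt ℝ N q := fun q hq =>
    (hN.contDiffAt (hU.mem_nhds hq)).differentiableAt two_ne_zero
  have hfd : ContDiffOn ℝ 1 (fderiv ℝ N) U := hN.fderiv_of_isOpen hU le_rfl
  have hfd_diff : DifferentiableAt ℝ (fderiv ℝ N) p :=
    (hfd.contDiffAt (hU.mem_nhds hp)).differentiableAt one_ne_zero
  set A := fderiv ℝ (fderiv ℝ N) p with hAdef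
  have hA : HasFDerivAt (fderiv ℝ N) A p := hfd_diff.hasFDerivAt
  have hev : ∀ᶠ q in nhds p, HasFDerivAt N (fderiv ℝ N q) q := by
    filter_upwards [hU.mem_nhds hp] with q hq using (hdiff q hq).hasFDerivAt
  have hsymm : A (0, 1) (1, 0) = A (1, 0) (0, 1) :=
    second_derivative_symmetric_of_eventually hev hA _ _
  -- curves
  have hγv : HasDerivAt (fun t : ℝ => ((p.1, t) : ℝ × ℝ)) ((0, 1) : ℝ × ℝ) p.2 :=
    (hasDerivAt_const p.2 p.1).prodMk (hasDerivAt_id p.2)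
  have hγh : HasDerivAt (fun t : ℝ => ((t, p.2) : ℝ × ℝ)) ((1, 0) : ℝ × ℝ) p.1 :=
    (hasDerivAt_id p.1).prodMk (hasDerivAt_const p.1 p.2)
  have hvU : ∀ᶠ t in nhds p.2, ((p.1, t) : ℝ × ℝ) ∈ U := by
    have hc : Continuous (fun t : ℝ => ((p.1, t) : ℝ × ℝ)) := by fun_prop
    exact hc.continuousAt.eventually_mem (hU.mem_nhds (by simpa using hp))
  have hhU : ∀ᶠ t in nhds p.1, ((t, p.2) : ℝ × ℝ) ∈ U := by
    have hc : Continuous (fun t : ℝ => ((t, p.2) : ℝ × ℝ)) := by fun_prop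
    exact hc.continuousAt.eventually_mem (hU.mem_nhds (by simpa using hp))
  -- derivative of fderiv along curves, applied to vectors
  have h1 : HasDerivAt (fun t => fderiv ℝ N (p.1, t)) (A (0, 1)) p.2 :=
    hA.comp_hasDerivAt p.2 hγv
  have h2 : HasDerivAt (fun t => fderiv ℝ N (t, p.2)) (A (1, 0)) p.1 :=
    hA.comp_hasDerivAt p.1 hγh
  have h1e : HasDerivAt (fun t => fderiv ℝ N (p.1, t) (1, 0)) (A (0, 1) (1, 0)) p.2 := by
    have := (ContinuousLinearMap.apply ℝ (EuclideanSpace ℝ (Fin 3))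
      ((1, 0) : ℝ × ℝ)).hasFDerivAt.comp_hasDerivAt p.2 h1
    exact this
  have h2e : HasDerivAt (fun t => fderiv ℝ N (t, p.2) (0, 1)) (A (1, 0) (0, 1)) p.1 := by
    have := (ContinuousLinearMap.apply ℝ (EuclideanSpace ℝ (Fin 3))
      ((0, 1) : ℝ × ℝ)).hasFDerivAt.comp_hasDerivAt p.1 h2
    exact this
  have hgv : HasDerivAt (fun t => N (p.1, t)) (fderiv ℝ N p (0, 1)) p.2 :=
    (hdiff p hp).hasFDerivAt.comp_hasDerivAt p.2 hγv
  have hgh : HasDerivAt (fun t => N (t, p.2)) (fderiv ℝ N p (1, 0)) p.1 :=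
    (hdiff p hp).hasFDerivAt.comp_hasDerivAt p.1 hγh
  -- the harmonic condition in fderiv form
  have hmix : pderivU (fun q => pderivV N q) p = A (1, 0) (0, 1) := by
    have heq : (fun t => pderivV N (t, p.2)) =ᶠ[nhds p.1]
        (fun t => fderiv ℝ N (t, p.2) (0, 1)) := by
      filter_upwards [hhU] with t ht using pderivV_eq (hdiff _ ht)
    rw [pderivU, heq.deriv_eq, h2e.deriv]
  have hzero : cross3 (A (1, 0) (0, 1)) (N p) = 0 := by
    rw [← hmix]; exact hharm p hp
  have hzero' : cross3 (A (0, 1) (1, 0)) (N p) = 0 := by rw [hsymm]; exact hzero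
  have hpu : pderivU N p = fderiv ℝ N p (1, 0) := pderivU_eq (hdiff p hp)
  have hpv : pderivV N p = fderiv ℝ N p (0, 1) := pderivV_eq (hdiff p hp)
  constructor
  · have heq : (fun t => cross3 (pderivU N (p.1, t)) (N (p.1, t))) =ᶠ[nhds p.2]
        (fun t => cross3 (fderiv ℝ N (p.1, t) (1, 0)) (N (p.1, t))) := by
      filter_upwards [hvU] with t ht
      rw [pderivU_eq (hdiff _ ht)]
    have hder := hasDerivAt_cross3 h1e hgv
    rw [pderivV, heq.deriv_eq, hder.deriv, hpu, hpv, hzero', zero_add]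
  · have heq : (fun t => -cross3 (pderivV N (t, p.2)) (N (t, p.2))) =ᶠ[nhds p.1]
        (fun t => -cross3 (fderiv ℝ N (t, p.2) (0, 1)) (N (t, p.2))) := by
      filter_upwards [hhU] with t ht
      rw [pderivV_eq (hdiff _ ht)]
    have hder : HasDerivAt (fun t => -cross3 (fderiv ℝ N (t, p.2) (0, 1)) (N (t, p.2))) _ p.1 :=
      (hasDerivAt_cross3 h2e hgh).neg
    rw [pderivU, heq.deriv_eq, hder.deriv, hpu, hpv, hzero, zero_add,
      cross3_antisymm, neg_neg]
end

section
/- Let N₀, N₁, N₂, N₁₂ ∈ ℝ³ be unit vectors with ⟨N₀, N₁⟩ = ⟨N₀, N₂⟩ = ⟨N₁₂, N₁⟩ = ⟨N₁₂, N₂⟩, and suppose N₀ − N₁₂ and N₁ − N₂ are linearly independent. Then (N₁ + N₂) × (N₀ + N₁₂) = 0 (cross product in ℝ³), i.e. N₁ + N₂ and N₀ + N₁₂ are parallel. -/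
open scoped RealInnerProductSpace

lemma cross3_zero_of_dep (x y : EuclideanSpace ℝ (Fin 3)) (s t : ℝ)
    (h : s • x + t • y = 0) (hst : s ≠ 0 ∨ t ≠ 0) : cross3 x y = 0 := by
  have hi : ∀ i, s * x i + t * y i = 0 := fun i => by
    have := congrArg (fun z : EuclideanSpace ℝ (Fin 3) => z i) h
    simpa using this
  have key : ∀ i j : Fin 3, x i * y j - x j * y i = 0 := by
    intro i j
    rcases hst with hs | ht
    · have h' : s * (x i * y j - x j * y i) = 0 := by
        linear_combination y j * hi i - y i * hi j
      exact (mul_eq_zero.mp h').resolve_left hs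
    · have h' : t * (x i * y j - x j * y i) = 0 := by
        linear_combination x i * hi j - x j * hi i
      exact (mul_eq_zero.mp h').resolve_left ht
  ext i
  fin_cases i <;> simpa [cross3] using key _ _

/-- Discrete Lorentz-harmonic (Moutard) condition on a quad of a spherical Chebyshev
net: if `N₀, N₁, N₂, N₁₂` are unit vectors with all four inner products between adjacent
normals equal, and `N₀ − N₁₂` and `N₁ − N₂` are linearly independent, then
`(N₁ + N₂) × (N₀ + N₁₂) = 0`, i.e. `N₁ + N₂` and `N₀ + N₁₂` are parallel. -/
theorem chebyshev_quad_moutard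
    (N₀ N₁ N₂ N₁₂ : EuclideanSpace ℝ (Fin 3))
    (h₀ : ‖N₀‖ = 1) (h₁ : ‖N₁‖ = 1) (h₂ : ‖N₂‖ = 1) (h₁₂ : ‖N₁₂‖ = 1)
    (ha : ⟪N₀, N₁⟫ = ⟪N₀, N₂⟫) (hb : ⟪N₀, N₂⟫ = ⟪N₁₂, N₁⟫) (hc : ⟪N₁₂, N₁⟫ = ⟪N₁₂, N₂⟫)
    (hli : LinearIndependent ℝ ![N₀ - N₁₂, N₁ - N₂]) :
    cross3 (N₁ + N₂) (N₀ + N₁₂) = 0 := by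
  set u : EuclideanSpace ℝ (Fin 3) := N₀ - N₁₂ with hu_def
  set v : EuclideanSpace ℝ (Fin 3) := N₁ - N₂ with hv_def
  set a : EuclideanSpace ℝ (Fin 3) := N₁ + N₂ with ha_def
  set b : EuclideanSpace ℝ (Fin 3) := N₀ + N₁₂ with hb_def
  have n0 : ⟪N₀, N₀⟫ = 1 := by rw [real_inner_self_eq_norm_mul_norm, h₀]; ring
  have n1 : ⟪N₁, N₁⟫ = 1 := by rw [real_inner_self_eq_norm_mul_norm, h₁]; ring
  have n2 : ⟪N₂, N₂⟫ = 1 := by rw [real_inner_self_eq_norm_mul_norm, h₂]; ring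
  have n12 : ⟪N₁₂, N₁₂⟫ = 1 := by rw [real_inner_self_eq_norm_mul_norm, h₁₂]; ring
  have hua : ⟪u, a⟫ = 0 := by
    simp only [hu_def, ha_def, inner_sub_left, inner_add_right]
    linarith
  have hva : ⟪v, a⟫ = 0 := by
    simp only [hv_def, ha_def, inner_sub_left, inner_add_right]
    linarith [real_inner_comm N₁ N₂]
  have hub : ⟪u, b⟫ = 0 := by
    simp only [hu_def, hb_def, inner_sub_left, inner_add_right]
    linarith [real_inner_comm N₀ N₁₂]
  have hvb : ⟪v, b⟫ = 0 := by
    simp only [hv_def, hb_def, inner_sub_left, inner_add_right]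
    linarith [real_inner_comm N₁ N₀, real_inner_comm N₁ N₁₂,
      real_inner_comm N₂ N₀, real_inner_comm N₂ N₁₂]
  set K : Submodule ℝ (EuclideanSpace ℝ (Fin 3)) :=
    Submodule.span ℝ ({u, v} : Set (EuclideanSpace ℝ (Fin 3))) with hK_def
  have mem_perp : ∀ x : EuclideanSpace ℝ (Fin 3), ⟪u, x⟫ = 0 → ⟪v, x⟫ = 0 → x ∈ Kᗮ := by
    intro x hux hvx
    rw [Submodule.mem_orthogonal]
    intro w hw
    induction hw using Submodule.span_induction with
    | mem y hy =>
      rcases hy with rfl | rfl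
      · exact hux
      · exact hvx
    | zero => simp
    | add w₁ w₂ _ _ ih1 ih2 => simp [inner_add_left, ih1, ih2]
    | smul c w₁ _ ih => simp [inner_smul_left, ih]
  have haK : a ∈ Kᗮ := mem_perp a hua hva
  have hbK : b ∈ Kᗮ := mem_perp b hub hvb
  have hrange : Set.range ![u, v] = ({u, v} : Set (EuclideanSpace ℝ (Fin 3))) := by
    ext w
    simp [Fin.exists_fin_two]
    tauto
  have hKrank : Module.finrank ℝ K = 2 := by
    have h := finrank_span_eq_card hli
    rw [hrange] at h
    simpa using h
  have hErank : Module.finrank ℝ (EuclideanSpace ℝ (Fin 3)) = 3 := by simp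
  have hperp : Module.finrank ℝ Kᗮ = 1 := by
    have h := K.finrank_add_finrank_orthogonal
    rw [hKrank, hErank] at h
    omega
  have hdep : ¬ LinearIndependent ℝ ![(⟨a, haK⟩ : Kᗮ), ⟨b, hbK⟩] := by
    intro h
    have hcard := h.fintype_card_le_finrank
    rw [hperp] at hcard
    simp at hcard
  rw [LinearIndependent.pair_iff] at hdep
  push_neg at hdep
  obtain ⟨s, t, hst, hne⟩ := hdep
  have hst' : s • a + t • b = 0 := by
    have := congrArg (Subtype.val) hst
    simpa using this
  exact cross3_zero_of_dep a b s t hst' (by tauto)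
end

section
/- Let N : ℤ × ℤ → ℝ³ satisfy (N(i+1,j) + N(i,j+1)) × (N(i,j) + N(i+1,j+1)) = 0 for all (i,j) ∈ ℤ × ℤ (cross product in ℝ³). Then there exists a map r : ℤ × ℤ → ℝ³ such that r(i+1,j) − r(i,j) = N(i+1,j) × N(i,j) and r(i,j+1) − r(i,j) = −N(i,j+1) × N(i,j) for all (i,j) ∈ ℤ × ℤ. -/
/-- Every `ℤ`-indexed family in an additive group has a discrete antiderivative. -/
lemma exists_prim {V : Type*} [AddCommGroup V] (u : ℤ → V) :
    ∃ U : ℤ → V, ∀ n : ℤ, U (n + 1) - U n = u n := by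
  refine ⟨fun n => (∑ k ∈ Finset.range n.toNat, u k)
      - (∑ k ∈ Finset.range (-n).toNat, u (-(k + 1))), fun n => ?_⟩
  rcases le_or_gt 0 n with h | h
  · have h1 : (-n).toNat = 0 := by omega
    have h2 : (-(n + 1)).toNat = 0 := by omega
    have h3 : (n + 1).toNat = n.toNat + 1 := by omega
    have hn : ((n.toNat : ℤ)) = n := by omega
    dsimp only
    rw [h1, h2, h3, Finset.sum_range_succ, hn]
    simp only [Finset.range_zero, Finset.sum_empty, sub_zero, add_sub_cancel_left]
  · have h1 : n.toNat = 0 := by omega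
    have h2 : (n + 1).toNat = 0 := by omega
    have h3 : (-n).toNat = (-(n + 1)).toNat + 1 := by omega
    have hn : (-(((-(n + 1)).toNat : ℤ) + 1)) = n := by omega
    dsimp only
    rw [h1, h2, h3, Finset.sum_range_succ, hn]
    simp only [Finset.range_zero, Finset.sum_empty, zero_sub]
    abel

/-- Componentwise values of the cross product. -/
lemma cross3_apply (x y : EuclideanSpace ℝ (Fin 3)) :
    cross3 x y 0 = x 1 * y 2 - x 2 * y 1 ∧
    cross3 x y 1 = x 2 * y 0 - x 0 * y 2 ∧
    cross3 x y 2 = x 0 * y 1 - x 1 * y 0 := by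
  refine ⟨rfl, rfl, rfl⟩

/-- Integrability of the discrete Lelieuvre equations: if `N : ℤ × ℤ → ℝ³` satisfies the
discrete Moutard (Lorentz-harmonic) condition `(N(i+1,j) + N(i,j+1)) × (N(i,j) + N(i+1,j+1)) = 0`
on every elementary quad, then there is a discrete K-surface `r : ℤ × ℤ → ℝ³` with
`r(i+1,j) − r(i,j) = N(i+1,j) × N(i,j)` and `r(i,j+1) − r(i,j) = −N(i,j+1) × N(i,j)`. -/
theorem discrete_lelieuvre_integrable
    (N : ℤ × ℤ → EuclideanSpace ℝ (Fin 3))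
    (hmoutard : ∀ i j : ℤ,
      cross3 (N (i + 1, j) + N (i, j + 1)) (N (i, j) + N (i + 1, j + 1)) = 0) :
    ∃ r : ℤ × ℤ → EuclideanSpace ℝ (Fin 3),
      (∀ i j : ℤ, r (i + 1, j) - r (i, j) = cross3 (N (i + 1, j)) (N (i, j))) ∧
      (∀ i j : ℤ, r (i, j + 1) - r (i, j) = -cross3 (N (i, j + 1)) (N (i, j))) := by
  set f : ℤ → ℤ → EuclideanSpace ℝ (Fin 3) :=
    fun i j => cross3 (N (i + 1, j)) (N (i, j)) with hf
  set g : ℤ → ℤ → EuclideanSpace ℝ (Fin 3) :=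
    fun i j => -cross3 (N (i, j + 1)) (N (i, j)) with hg
  -- compatibility
  have hcompat : ∀ i j : ℤ, f i (j + 1) - f i j = g (i + 1) j - g i j := by
    intro i j
    have hM := hmoutard i j
    ext x
    have h0 : cross3 (N (i + 1, j) + N (i, j + 1)) (N (i, j) + N (i + 1, j + 1)) x = 0 := by
      rw [hM]; rfl
    have hadd : ∀ (u v : EuclideanSpace ℝ (Fin 3)) (k : Fin 3), (u + v) k = u k + v k :=
      fun u v k => rfl
    have hsub : ∀ (u v : EuclideanSpace ℝ (Fin 3)) (k : Fin 3), (u - v) k = u k - v k :=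
      fun u v k => rfl
    have hneg : ∀ (u : EuclideanSpace ℝ (Fin 3)) (k : Fin 3), (-u) k = -(u k) :=
      fun u k => rfl
    fin_cases x <;>
    · simp only [hf, hg, hsub, hneg, cross3, hadd, PiLp.toLp_apply, WithLp.ofLp_toLp, Fin.isValue, Fin.zero_eta, Fin.mk_one, Fin.reduceFinMk,
        Matrix.cons_val_zero, Matrix.cons_val_one, Matrix.head_cons,
        Matrix.cons_val_two, Matrix.tail_cons] at h0 ⊢
      linarith [h0]
  obtain ⟨U1, hU1⟩ := exists_prim (fun i => f i 0)
  have hU2 : ∀ i : ℤ, ∃ U : ℤ → EuclideanSpace ℝ (Fin 3), ∀ j : ℤ, U (j + 1) - U j = g i j :=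
    fun i => exists_prim (g i)
  choose U2 hU2 using hU2
  refine ⟨fun p => U1 p.1 + U2 p.1 p.2 - U2 p.1 0, ?_, ?_⟩
  · intro i j
    have key : ∀ j : ℤ, (U2 (i + 1) j - U2 i j) - (U2 (i + 1) 0 - U2 i 0) = f i j - f i 0 := by
      intro j
      induction j using Int.induction_on with
      | zero => simp
      | succ k ih =>
          have h1 := hU2 (i + 1) k
          have h2 := hU2 i k
          have h3 := hcompat i k
          have : U2 (i+1) (k+1) - U2 i (k+1)
              = (U2 (i+1) k - U2 i k) + (g (i+1) k - g i k) := by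
            rw [← h1, ← h2]; abel
          rw [this, ← h3] at *
          rw [show ((U2 (i+1) k - U2 i k) + (f i (k+1) - f i k))
              - (U2 (i + 1) 0 - U2 i 0)
              = ((U2 (i+1) k - U2 i k) - (U2 (i + 1) 0 - U2 i 0)) + (f i (k+1) - f i k) by abel,
            ih]
          abel
      | pred k ih =>
          have h1 := hU2 (i + 1) (-k - 1)
          have h2 := hU2 i (-k - 1)
          have h3 := hcompat i (-k - 1)
          have e : (-k - 1 : ℤ) + 1 = -k := by ring
          rw [e] at h1 h2 h3
          have : U2 (i+1) (-k-1) - U2 i (-k-1)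
              = (U2 (i+1) (-k) - U2 i (-k)) - (g (i+1) (-k-1) - g i (-k-1)) := by
            rw [← h1, ← h2]; abel
          rw [this, ← h3]
          rw [show ((U2 (i+1) (-k) - U2 i (-k)) - (f i (-k) - f i (-k-1)))
              - (U2 (i + 1) 0 - U2 i 0)
              = ((U2 (i+1) (-k) - U2 i (-k)) - (U2 (i + 1) 0 - U2 i 0))
                - (f i (-k) - f i (-k-1)) by abel, ih]
          abel
    have hk := key j
    have h1 := hU1 i
    show (U1 (i+1) + U2 (i+1) j - U2 (i+1) 0) - (U1 i + U2 i j - U2 i 0) = f i j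
    have : (U1 (i+1) + U2 (i+1) j - U2 (i+1) 0) - (U1 i + U2 i j - U2 i 0)
        = (U1 (i+1) - U1 i) + ((U2 (i + 1) j - U2 i j) - (U2 (i + 1) 0 - U2 i 0)) := by abel
    rw [this, h1, hk]
    abel
  · intro i j
    have h := hU2 i j
    show (U1 i + U2 i (j+1) - U2 i 0) - (U1 i + U2 i j - U2 i 0) = g i j
    rw [← h]; abel
end

section
/- Let δ ∈ ℝ and let N : ℕ × ℕ → ℝ³ satisfy: ‖N(i,j)‖ = 1 for all (i,j); ⟨N(i,0), N(i+1,0)⟩ = cos δ for all i and ⟨N(0,j), N(0,j+1)⟩ = cos δ for all j; and for all (i,j), N(i+1,j) + N(i,j+1) ≠ 0 and N(i+1,j+1) = (2⟨N(i+1,j) + N(i,j+1), N(i,j)⟩/‖N(i+1,j) + N(i,j+1)‖²)·(N(i+1,j) + N(i,j+1)) − N(i,j). Then ⟨N(i,j), N(i+1,j)⟩ = cos δ and ⟨N(i,j), N(i,j+1)⟩ = cos δ for all (i,j) ∈ ℕ × ℕ. -/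
open scoped RealInnerProductSpace

lemma key_hh (a b c : EuclideanSpace ℝ (Fin 3)) (ha : ‖a‖ = 1) (hb : ‖b‖ = 1) (hc : ‖c‖ = 1)
    (hs : b + c ≠ 0) :
    ⟪c, (2 * ⟪b + c, a⟫ / ‖b + c‖ ^ 2) • (b + c) - a⟫ = ⟪a, b⟫ ∧
    ⟪b, (2 * ⟪b + c, a⟫ / ‖b + c‖ ^ 2) • (b + c) - a⟫ = ⟪a, c⟫ := by
  have hns : ‖b + c‖ ≠ 0 := norm_ne_zero_iff.mpr hs
  have hnorm : ‖b + c‖ ^ 2 = 2 * (1 + ⟪b, c⟫) := by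
    rw [← real_inner_self_eq_norm_sq]
    simp only [inner_add_left, inner_add_right]
    rw [real_inner_self_eq_norm_sq, real_inner_self_eq_norm_sq, hb, hc, real_inner_comm c b]
    ring
  have h2 : ‖b + c‖ ^ 2 ≠ 0 := pow_ne_zero 2 hns
  have hcc : ⟪c, c⟫ = (1 : ℝ) := by rw [real_inner_self_eq_norm_sq, hc]; norm_num
  have hbb : ⟪b, b⟫ = (1 : ℝ) := by rw [real_inner_self_eq_norm_sq, hb]; norm_num
  rw [hnorm] at h2
  constructor <;>
  · simp only [inner_sub_right, real_inner_smul_right, inner_add_left, inner_add_right,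
      hnorm, hcc, hbb, real_inner_comm b a, real_inner_comm c a, real_inner_comm c b]
    generalize ⟪b, a⟫ = u
    generalize ⟪c, a⟫ = v
    generalize hw : ⟪c, b⟫ = w
    have h3 : 2 * (1 + w) ≠ 0 := by rw [← hw, real_inner_comm b c]; exact h2
    have h4 : 1 + w ≠ 0 := fun h => h3 (by rw [h]; ring)
    field_simp
    ring

/-- Householder propagation of the Chebyshev property: if the boundary normals along the
two axes have constant consecutive angle `δ` and each fourth vertex is obtained from the
other three by the Householder reflection, then every edge of the resulting spherical net
subtends the angle `δ`. -/
theorem goursat_householder_chebyshev (δ : ℝ)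
    (N : ℕ × ℕ → EuclideanSpace ℝ (Fin 3))
    (hunit : ∀ p : ℕ × ℕ, ‖N p‖ = 1)
    (hu0 : ∀ i : ℕ, ⟪N (i, 0), N (i + 1, 0)⟫ = Real.cos δ)
    (hv0 : ∀ j : ℕ, ⟪N (0, j), N (0, j + 1)⟫ = Real.cos δ)
    (hne : ∀ i j : ℕ, N (i + 1, j) + N (i, j + 1) ≠ 0)
    (hhh : ∀ i j : ℕ, N (i + 1, j + 1) =
      (2 * ⟪N (i + 1, j) + N (i, j + 1), N (i, j)⟫ /
        ‖N (i + 1, j) + N (i, j + 1)‖ ^ 2) • (N (i + 1, j) + N (i, j + 1)) - N (i, j)) :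
    ∀ i j : ℕ, ⟪N (i, j), N (i + 1, j)⟫ = Real.cos δ ∧
      ⟪N (i, j), N (i, j + 1)⟫ = Real.cos δ := by
  have step : ∀ i j : ℕ,
      (⟪N (i, j + 1), N (i + 1, j + 1)⟫ = ⟪N (i, j), N (i + 1, j)⟫) ∧
      (⟪N (i + 1, j), N (i + 1, j + 1)⟫ = ⟪N (i, j), N (i, j + 1)⟫) := by
    intro i j
    have h := key_hh (N (i, j)) (N (i + 1, j)) (N (i, j + 1))
      (hunit _) (hunit _) (hunit _) (hne i j)
    rw [← hhh i j] at h
    exact h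
  have hP : ∀ i j : ℕ, ⟪N (i, j), N (i + 1, j)⟫ = Real.cos δ := by
    intro i j
    induction j with
    | zero => exact hu0 i
    | succ j ih => rw [(step i j).1]; exact ih
  have hQ : ∀ i j : ℕ, ⟪N (i, j), N (i, j + 1)⟫ = Real.cos δ := by
    intro i j
    induction i with
    | zero => exact hv0 j
    | succ i ih => rw [(step i j).2]; exact ih
  exact fun i j => ⟨hP i j, hQ i j⟩
end
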